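/- arXiv:2603.00428 — 3 statements merged into one kernel-verified Lean document; each statement's English description precedes it below -/
import Mathlib

section
/- Let p > 1 and let H be an r-uniform hypergraph with m edges. Then the p-spectral radius of H satisfies λ^(p)(H) ≤ (r!·m)^{1-1/p}. -/
open Finset

/-- `P_H(x) = r! * sum_{e in E} prod_{v in e} x_v` for an `r`-uniform hypergraph
with edge set `E` on vertex set `Fin n`. -/
noncomputable def polyForm (n r : Nat) (E : Finset (Finset (Fin n))) (x : Fin n -> Real) : Real :=
  (Nat.factorial r : Real) * Finset.sum E (fun e => Finset.prod e (fun v => x v))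

/-- The `p`-spectral radius: the supremum of `P_H(x)` over all `x` with unit `p`-norm. -/
noncomputable def pSpec (n r : Nat) (E : Finset (Finset (Fin n))) (p : Real) : Real :=
  sSup {y : Real | exists x : Fin n -> Real, (Finset.sum Finset.univ fun i => |x i| ^ p) = 1 /\ y = polyForm n r E x}

/-- Key combinatorial lemma: `r! * ∑_{e∈E} ∏_{v∈e} y v ≤ (∑ v, y v)^r` for nonneg `y`
and a family `E` of distinct `r`-subsets. -/
lemma factorial_mul_sum_prod_le {n r : ℕ} (y : Fin n → ℝ) (hy : ∀ v, 0 ≤ y v)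
    (E : Finset (Finset (Fin n))) (hE : ∀ e ∈ E, e.card = r) :
    (Nat.factorial r : ℝ) * ∑ e ∈ E, ∏ v ∈ e, y v ≤ (∑ v, y v) ^ r := by
  classical
  rw [Finset.sum_pow_eq_sum_piAntidiag (univ : Finset (Fin n)) y r]
  set φ : Finset (Fin n) → (Fin n → ℕ) := fun e v => if v ∈ e then 1 else 0 with hφ
  have hsum : ∀ e ∈ E, ∑ i, φ e i = r := by
    intro e he
    simp only [φ, Finset.sum_ite_mem, Finset.univ_inter, Finset.sum_const, smul_eq_mul, mul_one]
    exact hE e he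
  have hinj : Set.InjOn φ E := by
    intro e _ f _ h
    ext v
    have hv := congrFun h v
    simp only [φ] at hv
    by_cases h1 : v ∈ e <;> by_cases h2 : v ∈ f <;> simp [h1, h2] at hv ⊢
  have hmem : ∀ e ∈ E, φ e ∈ Finset.piAntidiag univ r := by
    intro e he
    rw [Finset.mem_piAntidiag]
    exact ⟨hsum e he, fun i _ => Finset.mem_univ i⟩
  have hmul : ∀ e ∈ E, Nat.multinomial univ (φ e) = Nat.factorial r := by
    intro e he
    have hspec := Nat.multinomial_spec (univ : Finset (Fin n)) (φ e)
    have hprod : ∏ i, (φ e i).factorial = 1 := by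
      apply Finset.prod_eq_one
      intro i _
      by_cases h : i ∈ e <;> simp [φ, h]
    rw [hprod, hsum e he, one_mul] at hspec
    exact hspec
  have hterm : ∀ e ∈ E, ∏ v, y v ^ (φ e v) = ∏ v ∈ e, y v := by
    intro e he
    simp only [φ, pow_ite, pow_one, pow_zero, Finset.prod_ite_mem, Finset.univ_inter]
  calc (Nat.factorial r : ℝ) * ∑ e ∈ E, ∏ v ∈ e, y v
      = ∑ e ∈ E, (Nat.multinomial univ (φ e) : ℝ) * ∏ v, y v ^ (φ e v) := by
        rw [Finset.mul_sum]
        exact Finset.sum_congr rfl fun e he => by rw [hmul e he, hterm e he]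
    _ = ∑ k ∈ E.image φ, (Nat.multinomial univ k : ℝ) * ∏ v, y v ^ k v := by
        rw [Finset.sum_image (fun a ha b hb h => hinj ha hb h)]
    _ ≤ ∑ k ∈ Finset.piAntidiag univ r, (Nat.multinomial univ k : ℝ) * ∏ v, y v ^ k v := by
        apply Finset.sum_le_sum_of_subset_of_nonneg
        · intro k hk
          obtain ⟨e, he, rfl⟩ := Finset.mem_image.mp hk
          exact hmem e he
        · intro k _ _
          have : (0:ℝ) ≤ ∏ v, y v ^ k v := Finset.prod_nonneg fun v _ => pow_nonneg (hy v) _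
          positivity

theorem pSpec_le_of_edges (n r : Nat) (hr : 2 <= r) (E : Finset (Finset (Fin n)))
    (hE : forall e, e ∈ E -> e.card = r) (p : Real) (hp : 1 < p) :
    pSpec n r E p <= ((Nat.factorial r : Real) * E.card) ^ (1 - 1 / p) := by
  have hp0 : 0 < p := lt_trans one_pos hp
  have hp1 : 0 ≤ 1 - 1/p := by
    have : 1/p < 1 := by rw [div_lt_one hp0]; exact hp
    linarith
  have hF : (0:ℝ) < Nat.factorial r := by positivity
  have hRHS : (0:ℝ) ≤ ((Nat.factorial r : ℝ) * E.card) ^ (1 - 1/p) := by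
    apply Real.rpow_nonneg; positivity
  apply Real.sSup_le _ hRHS
  rintro z ⟨x, hx, rfl⟩
  -- trivial case: no edges
  rcases Finset.eq_empty_or_nonempty E with rfl | hEne
  · simpa [polyForm] using hRHS
  have hm : (0:ℝ) < E.card := by exact_mod_cast Finset.card_pos.mpr hEne
  set y : Fin n → ℝ := fun v => |x v| ^ p with hy
  have hy0 : ∀ v, 0 ≤ y v := fun v => Real.rpow_nonneg (abs_nonneg _) _
  have hy1 : ∑ v, y v = 1 := hx
  set a : Finset (Fin n) → ℝ := fun e => ∏ v ∈ e, |x v| with ha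
  have ha0 : ∀ e, 0 ≤ a e := fun e => Finset.prod_nonneg fun v _ => abs_nonneg _
  -- step A : bound the form by its absolute version
  have stepA : polyForm n r E x ≤ (Nat.factorial r : ℝ) * ∑ e ∈ E, a e := by
    unfold polyForm
    apply mul_le_mul_of_nonneg_left _ (by positivity)
    apply Finset.sum_le_sum
    intro e _
    calc ∏ v ∈ e, x v ≤ |∏ v ∈ e, x v| := le_abs_self _
      _ = a e := Finset.abs_prod e _
  -- step B : ∑ (a e)^p ≤ 1/r!
  have stepB : ∑ e ∈ E, (a e) ^ p ≤ 1 / (Nat.factorial r : ℝ) := by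
    have h1 : ∀ e ∈ E, (a e) ^ p = ∏ v ∈ e, y v := by
      intro e _
      rw [ha, ← Real.finset_prod_rpow e _ (fun v _ => abs_nonneg (x v)) p]
    rw [Finset.sum_congr rfl h1]
    rw [le_div_iff₀ hF, mul_comm]
    calc (Nat.factorial r : ℝ) * ∑ e ∈ E, ∏ v ∈ e, y v ≤ (∑ v, y v) ^ r :=
          factorial_mul_sum_prod_le y hy0 E hE
      _ = 1 := by rw [hy1, one_pow]
  -- step C : Hölder/Jensen
  have hplep : (1:ℝ) ≤ p := le_of_lt hp
  have stepC : ∑ e ∈ E, a e ≤ (E.card : ℝ) ^ (1 - 1/p) * (∑ e ∈ E, (a e) ^ p) ^ (1/p) := by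
    have jensen := Real.arith_mean_le_rpow_mean E (fun _ => 1 / (E.card : ℝ)) a
      (fun _ _ => by positivity)
      (by rw [Finset.sum_const, nsmul_eq_mul]; field_simp)
      (fun e _ => ha0 e) hplep
    -- jensen : ∑ (1/m) * a e ≤ (∑ (1/m) * (a e)^p)^(1/p)
    have hL : ∑ e ∈ E, (1 / (E.card : ℝ)) * a e = (E.card : ℝ)⁻¹ * ∑ e ∈ E, a e := by
      rw [Finset.mul_sum]; simp [one_div]
    have hR : ∑ e ∈ E, (1 / (E.card : ℝ)) * (a e) ^ p
        = (E.card : ℝ)⁻¹ * ∑ e ∈ E, (a e) ^ p := by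
      rw [Finset.mul_sum]; simp [one_div]
    rw [hL, hR] at jensen
    have hsa : (0:ℝ) ≤ ∑ e ∈ E, (a e) ^ p :=
      Finset.sum_nonneg fun e _ => Real.rpow_nonneg (ha0 e) _
    have expand : ((E.card : ℝ)⁻¹ * ∑ e ∈ E, (a e) ^ p) ^ (1/p)
        = ((E.card : ℝ)⁻¹) ^ (1/p) * (∑ e ∈ E, (a e) ^ p) ^ (1/p) :=
      Real.mul_rpow (by positivity) hsa
    rw [expand] at jensen
    have key : ∑ e ∈ E, a e ≤ (E.card : ℝ) * (((E.card : ℝ)⁻¹) ^ (1/p)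
        * (∑ e ∈ E, (a e) ^ p) ^ (1/p)) :=
      (inv_mul_le_iff₀ hm).mp jensen
    calc ∑ e ∈ E, a e ≤ (E.card : ℝ) * (((E.card : ℝ)⁻¹) ^ (1/p)
          * (∑ e ∈ E, (a e) ^ p) ^ (1/p)) := key
      _ = (E.card : ℝ) ^ (1 - 1/p) * (∑ e ∈ E, (a e) ^ p) ^ (1/p) := by
          rw [← mul_assoc]
          congr 1
          rw [Real.inv_rpow (le_of_lt hm), Real.rpow_sub hm, Real.rpow_one]
          field_simp
  -- combine
  have hS : (∑ e ∈ E, (a e) ^ p) ^ (1/p) ≤ (1 / (Nat.factorial r : ℝ)) ^ (1/p) := by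
    apply Real.rpow_le_rpow (Finset.sum_nonneg fun e _ => Real.rpow_nonneg (ha0 e) _)
      stepB (by positivity)
  have hfin : (Nat.factorial r : ℝ) * ((E.card : ℝ) ^ (1 - 1/p)
      * (1 / (Nat.factorial r : ℝ)) ^ (1/p))
      = ((Nat.factorial r : ℝ) * E.card) ^ (1 - 1/p) := by
    have hFp : (0:ℝ) < (Nat.factorial r : ℝ) ^ (1/p) := Real.rpow_pos_of_pos hF _
    rw [Real.mul_rpow (le_of_lt hF) (le_of_lt hm), Real.rpow_sub hF, Real.rpow_one,
      Real.div_rpow zero_le_one (le_of_lt hF), Real.one_rpow]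
    field_simp
  calc polyForm n r E x ≤ (Nat.factorial r : ℝ) * ∑ e ∈ E, a e := stepA
    _ ≤ (Nat.factorial r : ℝ) * ((E.card : ℝ) ^ (1 - 1/p) * (∑ e ∈ E, (a e) ^ p) ^ (1/p)) :=
        mul_le_mul_of_nonneg_left stepC (le_of_lt hF)
    _ ≤ (Nat.factorial r : ℝ) * ((E.card : ℝ) ^ (1 - 1/p) * (1 / (Nat.factorial r : ℝ)) ^ (1/p)) := by
        apply mul_le_mul_of_nonneg_left _ (le_of_lt hF)
        exact mul_le_mul_of_nonneg_left hS (Real.rpow_nonneg (le_of_lt hm) _)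
    _ = ((Nat.factorial r : ℝ) * E.card) ^ (1 - 1/p) := hfin
end

section
/- For an r-uniform hypergraph H, (1/r!)·λ^(∞)(H) equals the number of edges of H, i.e., lim_{p→∞} λ^(p)(H) = r!·e(H). -/
open Finset

lemma polyForm_le_aux (n r : Nat) (E : Finset (Finset (Fin n))) (p : Real) (hp : 0 < p)
    (x : Fin n -> Real) (hx : (Finset.sum Finset.univ fun i => |x i| ^ p) = 1) :
    polyForm n r E x ≤ (Nat.factorial r : Real) * E.card := by
  have hxi : ∀ i, |x i| ≤ 1 := by
    intro i
    by_contra h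
    push_neg at h
    have h1 : (1:ℝ) < |x i| ^ p := by
      have := Real.rpow_lt_rpow (by norm_num : (0:ℝ) ≤ 1) h hp
      simpa using this
    have h2 : |x i| ^ p ≤ 1 := by
      rw [← hx]
      exact Finset.single_le_sum (fun j _ => Real.rpow_nonneg (abs_nonneg _) p)
        (Finset.mem_univ i)
    linarith
  have hsum : Finset.sum E (fun e => Finset.prod e fun v => x v) ≤ (E.card : ℝ) := by
    calc Finset.sum E (fun e => Finset.prod e fun v => x v)
        ≤ Finset.sum E (fun _ => (1:ℝ)) := by
          apply Finset.sum_le_sum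
          intro e _
          calc Finset.prod e (fun v => x v) ≤ |Finset.prod e fun v => x v| := le_abs_self _
            _ = Finset.prod e (fun v => |x v|) := by rw [Finset.abs_prod]
            _ ≤ 1 := Finset.prod_le_one (fun v _ => abs_nonneg _) (fun v _ => hxi v)
      _ = E.card := by simp
  have hfac : (0:ℝ) ≤ (Nat.factorial r : ℝ) := by positivity
  exact mul_le_mul_of_nonneg_left hsum hfac

theorem pSpec_tendsto_edges (n r : Nat) (hr : 2 <= r) (E : Finset (Finset (Fin n)))
    (hE : forall e, e ∈ E -> e.card = r) :
    Filter.Tendsto (fun p : Real => pSpec n r E p) Filter.atTop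
      (nhds ((Nat.factorial r : Real) * E.card)) := by
  rcases E.eq_empty_or_nonempty with hemp | ⟨e0, he0⟩
  · subst hemp
    have h : ∀ p : ℝ, pSpec n r (∅ : Finset (Finset (Fin n))) p = 0 := by
      intro p
      have hS : {y : Real | ∃ x : Fin n -> Real,
          (Finset.sum Finset.univ fun i => |x i| ^ p) = 1 ∧
          y = polyForm n r ∅ x} ⊆ {0} := by
        rintro y ⟨x, -, rfl⟩
        simp [polyForm]
      rcases Set.subset_singleton_iff_eq.mp hS with h0 | h0
      · rw [pSpec, h0, Real.sSup_empty]
      · rw [pSpec, h0, csSup_singleton]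
    simp [h]
  · -- E nonempty
    have hcard : e0.card = r := hE e0 he0
    have hepos : e0.Nonempty := Finset.card_pos.mp (by omega)
    obtain ⟨v0, -⟩ := hepos
    have hn : (0:ℝ) < (n:ℝ) := by exact_mod_cast v0.pos
    set L : ℝ := (Nat.factorial r : ℝ) * E.card with hL
    have key : ∀ p : ℝ, 1 ≤ p →
        (Nat.factorial r : ℝ) * ((E.card : ℝ) * ((n:ℝ) ^ (-1/p)) ^ r) ≤ pSpec n r E p ∧
        pSpec n r E p ≤ L := by
      intro p hp
      have hp0 : 0 < p := lt_of_lt_of_le one_pos hp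
      set c : ℝ := (n:ℝ) ^ (-1/p) with hc
      have hcpos : 0 < c := Real.rpow_pos_of_pos hn _
      have hcp : c ^ p = ((n:ℝ))⁻¹ := by
        rw [hc, ← Real.rpow_mul (le_of_lt hn)]
        have : -1/p * p = -1 := by field_simp
        rw [this, Real.rpow_neg_one]
      have hconstraint : (Finset.sum Finset.univ fun _ : Fin n => |c| ^ p) = 1 := by
        rw [Finset.sum_const, Finset.card_univ, Fintype.card_fin, abs_of_pos hcpos,
          hcp, nsmul_eq_mul]
        exact mul_inv_cancel₀ (ne_of_gt hn)
      have hval : polyForm n r E (fun _ => c)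
          = (Nat.factorial r : ℝ) * ((E.card : ℝ) * c ^ r) := by
        unfold polyForm
        congr 1
        rw [Finset.sum_congr rfl (fun e he => by
          rw [Finset.prod_const, hE e he])]
        rw [Finset.sum_const, nsmul_eq_mul]
      set S := {y : Real | ∃ x : Fin n -> Real,
        (Finset.sum Finset.univ fun i => |x i| ^ p) = 1 ∧ y = polyForm n r E x} with hSdef
      have hub : ∀ y ∈ S, y ≤ L := by
        rintro y ⟨x, hx1, rfl⟩
        exact polyForm_le_aux n r E p hp0 x hx1
      have hmem : (Nat.factorial r : ℝ) * ((E.card : ℝ) * c ^ r) ∈ S :=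
        ⟨fun _ => c, hconstraint, hval.symm⟩
      constructor
      · exact le_csSup ⟨L, hub⟩ hmem
      · exact Real.sSup_le hub (by positivity)
    -- squeeze
    have h1 : Filter.Tendsto (fun p : ℝ => -1/p) Filter.atTop (nhds 0) := by
      have := tendsto_inv_atTop_zero (𝕜 := ℝ)
      have h2 := this.neg
      simp only [neg_zero] at h2
      refine h2.congr (fun p => by rw [neg_div, one_div])
    have h2 : Filter.Tendsto (fun p : ℝ => (n:ℝ) ^ (-1/p)) Filter.atTop (nhds 1) := by
      have hc := (Real.continuousAt_const_rpow (a := (n:ℝ)) (b := 0) (ne_of_gt hn)).tendsto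
      have := hc.comp h1
      simpa [Function.comp_def, Real.rpow_zero] using this
    have hg : Filter.Tendsto
        (fun p : ℝ => (Nat.factorial r : ℝ) * ((E.card : ℝ) * ((n:ℝ) ^ (-1/p)) ^ r))
        Filter.atTop (nhds L) := by
      have := ((h2.pow r).const_mul (E.card : ℝ)).const_mul (Nat.factorial r : ℝ)
      simpa [hL, mul_assoc] using this
    refine tendsto_of_tendsto_of_tendsto_of_le_of_le' hg tendsto_const_nhds ?_ ?_
    · filter_upwards [Filter.eventually_ge_atTop (1:ℝ)] with p hp
      exact (key p hp).1
    · filter_upwards [Filter.eventually_ge_atTop (1:ℝ)] with p hp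
      exact (key p hp).2
end

section
/- Let p > 9/8, let n_1 ≥ ... ≥ n_k be positive integers with n_1 ≥ n_k + 2, and let y_1, ..., y_k be positive reals with n_1 y_1^p + ... + n_k y_k^p = 1. Set y* = ((n_1 y_1^p + n_k y_k^p)/(n_1 + n_k))^{1/p}. Then n_1 n_k y_1 y_k < ⌈(n_1+n_k)/2⌉·⌊(n_1+n_k)/2⌋·(y*)^2. -/
lemma kny_aux_nat (n m : Nat) (h : m + 2 <= n) :
    n*m + 1 + (n+m)%2 <= ((n+m+1)/2)*((n+m)/2)
    ∧ 4*(((n+m+1)/2)*((n+m)/2)) + (n+m)%2 = (n+m)*(n+m) := by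
  obtain ⟨c, rfl⟩ : ∃ c, n = m + 2 + c := ⟨n - (m+2), by omega⟩
  rcases Nat.even_or_odd c with ⟨e, rfl⟩ | ⟨e, rfl⟩
  · have h1 : (m+2+(e+e)+m+1)/2 = m + e + 1 := by omega
    have h2 : (m+2+(e+e)+m)/2 = m + e + 1 := by omega
    have h3 : (m+2+(e+e)+m)%2 = 0 := by omega
    rw [h1, h2, h3]
    constructor
    · nlinarith
    · ring
  · have h1 : (m+2+(2*e+1)+m+1)/2 = m + e + 2 := by omega
    have h2 : (m+2+(2*e+1)+m)/2 = m + e + 1 := by omega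
    have h3 : (m+2+(2*e+1)+m)%2 = 1 := by omega
    rw [h1, h2, h3]
    constructor
    · nlinarith
    · ring

set_option maxHeartbeats 800000 in
theorem kang_nikiforov_yuan_second (p : Real) (hp : 9 / 8 < p) (k : Nat)
    (nn : Fin (k + 1) -> Nat) (y : Fin (k + 1) -> Real)
    (hmono : forall i j : Fin (k + 1), i <= j -> nn j <= nn i)
    (hnpos : forall i, 0 < nn i) (hypos : forall i, 0 < y i)
    (hsum : (Finset.sum Finset.univ fun i => (nn i : Real) * y i ^ p) = 1)
    (hgap : nn (Fin.last k) + 2 <= nn 0) :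
    (nn 0 : Real) * (nn (Fin.last k) : Real) * y 0 * y (Fin.last k)
      < (((nn 0 + nn (Fin.last k) + 1) / 2 : Nat) : Real)
          * (((nn 0 + nn (Fin.last k)) / 2 : Nat) : Real) * ((((nn 0 : Real) * y 0 ^ p + (nn (Fin.last k) : Real) * y (Fin.last k) ^ p) / ((nn 0 : Real) + (nn (Fin.last k) : Real))) ^ (1 / p)) ^ (2 : Nat) := by
  have hp0 : 0 < p := by linarith
  set s := 1 / p with hs
  have hs0 : 0 < s := by positivity
  have hs1 : s < 8/9 := by
    rw [hs, div_lt_div_iff₀ hp0 (by norm_num)]; linarith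
  set n : Real := (nn 0 : Real) with hn_def
  set m : Real := (nn (Fin.last k) : Real) with hm_def
  set a := y 0 with ha_def
  set b := y (Fin.last k) with hb_def
  have ha : 0 < a := hypos 0
  have hb : 0 < b := hypos _
  have hn : 0 < n := by rw [hn_def]; exact_mod_cast hnpos 0
  have hm : 0 < m := by rw [hm_def]; exact_mod_cast hnpos (Fin.last k)
  set u := a ^ p with hu_def
  set v := b ^ p with hv_def
  have hu0 : 0 < u := Real.rpow_pos_of_pos ha p
  have hv0 : 0 < v := Real.rpow_pos_of_pos hb p
  set S := n * u + m * v with hS_def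
  have hS0 : 0 < S := by positivity
  set Cr : Real := (((nn 0 + nn (Fin.last k) + 1) / 2 : Nat) : Real)
      * (((nn 0 + nn (Fin.last k)) / 2 : Nat) : Real) with hCr_def
  set A : Real := n * m with hA_def
  have hA0 : 0 < A := by positivity
  set Mv : Real := (n + m)^2 / 4 with hMv_def
  have hMv0 : 0 < Mv := by positivity
  -- cast nat facts
  obtain ⟨hnat1, hnat2⟩ := kny_aux_nat (nn 0) (nn (Fin.last k)) hgap
  set r : Real := (((nn 0 + nn (Fin.last k)) % 2 : Nat) : Real) with hr_def
  have hr01 : r = 0 ∨ r = 1 := by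
    rcases Nat.mod_two_eq_zero_or_one (nn 0 + nn (Fin.last k)) with h | h <;>
      [left; right] <;> rw [hr_def, h] <;> norm_num
  have hAC : A + 1 + r ≤ Cr := by
    rw [hA_def, hCr_def, hr_def, hn_def, hm_def]
    exact_mod_cast hnat1
  have hMC : 4 * Mv = 4 * Cr + r := by
    have h3 : ((nn 0:Real) + (nn (Fin.last k):Real)) * ((nn 0:Real) + (nn (Fin.last k):Real)) = 4 * Cr + r := by
      rw [hCr_def, hr_def]
      exact_mod_cast hnat2.symm
    rw [hMv_def, hn_def, hm_def]
    nlinarith [h3]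
  -- key real inequality
  have key2 : A * ((n + m)^2 / (4 * A)) ^ s < Cr := by
    have e1 : (n + m)^2 / (4 * A) = Mv / A := by rw [hMv_def]; ring
    have e2 : A * (Mv / A) ^ s = A ^ (1 - s) * Mv ^ s := by
      rw [Real.div_rpow hMv0.le hA0.le, Real.rpow_sub hA0, Real.rpow_one]
      ring
    rw [e1, e2]
    have hgm : A ^ (1 - s) * Mv ^ s ≤ (1 - s) * A + s * Mv :=
      Real.geom_mean_le_arith_mean2_weighted (by linarith) hs0.le hA0.le hMv0.le (by ring)
    have hlt : (1 - s) * A + s * Mv < Cr := by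
      have h1s : (0:Real) ≤ 1 - s := by linarith
      have hmul : (1 - s) * A ≤ (1 - s) * (Cr - 1 - r) :=
        mul_le_mul_of_nonneg_left (by linarith) h1s
      have hsMv : s * Mv = s * Cr + s * r / 4 := by
        have hMv4 : Mv = Cr + r / 4 := by linarith
        rw [hMv4]; ring
      rcases hr01 with h | h <;> rw [h] at hmul hsMv <;> nlinarith [hmul, hsMv]
    linarith
  -- ab rewriting
  have hps : p * s = 1 := by rw [hs]; field_simp
  have hpow : ∀ x : Real, 0 < x → (x ^ p) ^ s = x := fun x hx => by
    rw [← Real.rpow_mul hx.le, hps, Real.rpow_one]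
  have hab : a * b = (u * v) ^ s := by
    rw [Real.mul_rpow hu0.le hv0.le, hu_def, hv_def, hpow a ha, hpow b hb]
  -- step 1
  have step1 : u * v ≤ S ^ 2 / (4 * A) := by
    rw [hS_def, hA_def, le_div_iff₀ (by positivity)]
    nlinarith [sq_nonneg (n * u - m * v)]
  have step1' : (u * v) ^ s ≤ (S ^ 2 / (4 * A)) ^ s :=
    Real.rpow_le_rpow (by positivity) step1 hs0.le
  -- RHS rewriting
  have hW : (0:Real) < S / (n + m) := by positivity
  have hRHS : ((S / (n + m)) ^ s) ^ (2 : Nat) = (S ^ 2 / (n + m) ^ 2) ^ s := by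
    rw [← Real.rpow_natCast ((S / (n + m)) ^ s) 2, ← Real.rpow_mul hW.le, mul_comm,
      Real.rpow_mul hW.le, Real.rpow_natCast, div_pow]
  have hsplit : S ^ 2 / (4 * A) = ((n + m)^2 / (4 * A)) * (S ^ 2 / (n + m) ^ 2) := by
    field_simp
  calc n * m * a * b = A * ((u * v) ^ s) := by rw [hA_def, mul_assoc, hab]
    _ ≤ A * ((S ^ 2 / (4 * A)) ^ s) := by
        exact mul_le_mul_of_nonneg_left step1' hA0.le
    _ = (A * (((n + m)^2 / (4 * A)) ^ s)) * ((S ^ 2 / (n + m) ^ 2) ^ s) := by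
        rw [hsplit, Real.mul_rpow (by positivity) (by positivity)]
        ring
    _ < Cr * ((S ^ 2 / (n + m) ^ 2) ^ s) :=
        mul_lt_mul_of_pos_right key2 (by positivity)
    _ = Cr * ((S / (n + m)) ^ s) ^ (2 : Nat) := by rw [hRHS]
end
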